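/- arXiv:1806.04589 — 2 statements merged into one kernel-verified Lean document; each statement's English description precedes it below -/
import Mathlib

section
/- let a, b be positive real numbers and let z, z₀ ≥ 0. Then log₂(1 + a/(b + z)) ≥ log₂(1 + a/(b + z₀)) − (a/((a + b + z₀)·(b + z₀)·ln 2))·(z − z₀), with equality when z = z₀. -/
/-- Scalar form of Lemma 2: `log₂(1 + a/(b + z))` lies above its tangent line at
`z₀`, with equality when `z = z₀`. -/
theorem stmt_13 (a b : ℝ) (ha : 0 < a) (hb : 0 < b) (z z₀ : ℝ) (hz : 0 ≤ z)
    (hz₀ : 0 ≤ z₀) :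
    Real.logb 2 (1 + a / (b + z)) ≥
        Real.logb 2 (1 + a / (b + z₀)) -
          a / ((a + b + z₀) * (b + z₀) * Real.log 2) * (z - z₀) ∧
      (z = z₀ →
        Real.logb 2 (1 + a / (b + z)) =
          Real.logb 2 (1 + a / (b + z₀)) -
            a / ((a + b + z₀) * (b + z₀) * Real.log 2) * (z - z₀)) := by
  have hB : (0:ℝ) < b + z₀ := by linarith
  have hB' : (0:ℝ) < b + z := by linarith
  have hA : (0:ℝ) < a + b + z₀ := by linarith
  have hA' : (0:ℝ) < a + b + z := by linarith
  have hlog2 : 0 < Real.log 2 := Real.log_pos (by norm_num)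
  constructor
  · -- log bound on the ratio
    have hratio : (0:ℝ) < ((b+z)*(a+b+z₀))/((b+z₀)*(a+b+z)) := by positivity
    have hlb := Real.log_le_sub_one_of_pos hratio
    rw [Real.log_div (by positivity) (by positivity),
        Real.log_mul (ne_of_gt hB') (ne_of_gt hA),
        Real.log_mul (ne_of_gt hB) (ne_of_gt hA')] at hlb
    have key : a/((a+b+z₀)*(b+z₀))*(z-z₀) - (((b+z)*(a+b+z₀))/((b+z₀)*(a+b+z)) - 1)
        = a*(z-z₀)^2/((a+b+z₀)*(b+z₀)*(a+b+z)) := by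
      field_simp
      ring
    have hpos : (0:ℝ) ≤ a*(z-z₀)^2/((a+b+z₀)*(b+z₀)*(a+b+z)) := by positivity
    have hfrac : ((b+z)*(a+b+z₀))/((b+z₀)*(a+b+z)) - 1 ≤ a/((a+b+z₀)*(b+z₀))*(z-z₀) := by
      linarith [key, hpos]
    -- main inequality in natural log
    have hmain : Real.log (a+b+z) - Real.log (b+z) ≥
        Real.log (a+b+z₀) - Real.log (b+z₀) - a/((a+b+z₀)*(b+z₀))*(z-z₀) := by
      linarith
    have e1 : 1 + a / (b + z) = (a+b+z)/(b+z) := by field_simp; ring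
    have e2 : 1 + a / (b + z₀) = (a+b+z₀)/(b+z₀) := by field_simp; ring
    rw [e1, e2, ge_iff_le, Real.logb, Real.logb,
        Real.log_div (ne_of_gt hA') (ne_of_gt hB'),
        Real.log_div (ne_of_gt hA) (ne_of_gt hB)]
    have hc : a / ((a + b + z₀) * (b + z₀) * Real.log 2) * (z - z₀)
        = (a/((a+b+z₀)*(b+z₀))*(z-z₀)) / Real.log 2 := by
      field_simp
    rw [hc, div_sub_div_same, div_le_div_iff_of_pos_right hlog2]
    linarith
  · intro h
    subst h
    simp
end

section
/- Let β₀, P, σ², H > 0, let q_m be a point of the Euclidean plane (EuclideanSpace ℝ (Fin 2)), and let q, q̂ ∈ EuclideanSpace ℝ (Fin 2). Then log₂(1 + β₀·P/(σ²·(H² + ‖q − q_m‖²))) ≥ log₂(1 + β₀·P/(σ²·(H² + ‖q̂ − q_m‖²))) − (β₀·P/ln 2)/((σ²·H² + β₀·P + σ²·‖q̂ − q_m‖²)·(H² + ‖q̂ − q_m‖²)) · (‖q − q_m‖² − ‖q̂ − q_m‖²), with equality when q = q̂. -/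
private lemma aux_log (a b z zh : ℝ) (ha : 0 < a) (hb : 0 < b) (hz : 0 ≤ z)
    (hzh : 0 ≤ zh) :
    Real.log (1 + a / (b + z)) - Real.log (1 + a / (b + zh)) ≥
      -(a / ((a + b + zh) * (b + zh))) * (z - zh) := by
  have hbz : 0 < b + z := by linarith
  have hbzh : 0 < b + zh := by linarith
  have habz : 0 < a + b + z := by linarith
  have habzh : 0 < a + b + zh := by linarith
  have hu : 0 < 1 + a / (b + z) := by positivity
  have hv : 0 < 1 + a / (b + zh) := by positivity
  have key : 1 - (1 + a / (b + zh)) / (1 + a / (b + z)) ≤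
      Real.log (1 + a / (b + z)) - Real.log (1 + a / (b + zh)) := by
    have h := Real.log_le_sub_one_of_pos
      (show 0 < (1 + a / (b + zh)) / (1 + a / (b + z)) by positivity)
    rw [Real.log_div hv.ne' hu.ne'] at h
    linarith
  refine le_trans ?_ key
  have h1 : 1 - (1 + a / (b + zh)) / (1 + a / (b + z)) =
      a * (zh - z) / ((b + zh) * (a + b + z)) := by
    field_simp
    ring
  rw [h1, ← sub_nonneg]
  have h2 : a * (zh - z) / ((b + zh) * (a + b + z)) -
      -(a / ((a + b + zh) * (b + zh))) * (z - zh) =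
      a * (zh - z) ^ 2 / ((b + zh) * (a + b + z) * (a + b + zh)) := by
    field_simp
    ring
  rw [h2]
  positivity

/-- Lemma 2: the achievable spectral efficiency is lower bounded by its first-order
surrogate in the squared UAV-user distance taken at the local trajectory point `q̂`,
with equality when `q = q̂`. -/
theorem stmt_14 (β₀ P σ2 H : ℝ) (hβ : 0 < β₀) (hP : 0 < P) (hσ : 0 < σ2)
    (hH : 0 < H) (qm q qhat : EuclideanSpace ℝ (Fin 2)) :
    Real.logb 2 (1 + β₀ * P / (σ2 * (H ^ 2 + ‖q - qm‖ ^ 2))) ≥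
        Real.logb 2 (1 + β₀ * P / (σ2 * (H ^ 2 + ‖qhat - qm‖ ^ 2))) -
          β₀ * P / Real.log 2 /
              ((σ2 * H ^ 2 + β₀ * P + σ2 * ‖qhat - qm‖ ^ 2) *
                (H ^ 2 + ‖qhat - qm‖ ^ 2)) *
            (‖q - qm‖ ^ 2 - ‖qhat - qm‖ ^ 2) ∧
      (q = qhat →
        Real.logb 2 (1 + β₀ * P / (σ2 * (H ^ 2 + ‖q - qm‖ ^ 2))) =
          Real.logb 2 (1 + β₀ * P / (σ2 * (H ^ 2 + ‖qhat - qm‖ ^ 2))) -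
            β₀ * P / Real.log 2 /
                ((σ2 * H ^ 2 + β₀ * P + σ2 * ‖qhat - qm‖ ^ 2) *
                  (H ^ 2 + ‖qhat - qm‖ ^ 2)) *
              (‖q - qm‖ ^ 2 - ‖qhat - qm‖ ^ 2)) := by
  have hd1 : (0:ℝ) ≤ ‖q - qm‖ ^ 2 := by positivity
  have hd2 : (0:ℝ) ≤ ‖qhat - qm‖ ^ 2 := by positivity
  set z : ℝ := ‖q - qm‖ ^ 2 with hzdef
  set zh : ℝ := ‖qhat - qm‖ ^ 2 with hzhdef
  have ha : 0 < β₀ * P / σ2 := by positivity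
  have hb : 0 < H ^ 2 := by positivity
  have hL : 0 < Real.log 2 := Real.log_pos one_lt_two
  constructor
  · have h := aux_log (β₀ * P / σ2) (H ^ 2) z zh ha hb hd1 hd2
    have hbz : (0:ℝ) < H ^ 2 + z := by linarith
    have hbzh : (0:ℝ) < H ^ 2 + zh := by linarith
    have hden : (0:ℝ) < σ2 * H ^ 2 + β₀ * P + σ2 * zh := by nlinarith
    have e1 : ∀ d : ℝ, 0 < H ^ 2 + d →
        β₀ * P / (σ2 * (H ^ 2 + d)) = (β₀ * P / σ2) / (H ^ 2 + d) := by
      intro d hd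
      field_simp
    have e2 : β₀ * P / Real.log 2 /
        ((σ2 * H ^ 2 + β₀ * P + σ2 * zh) * (H ^ 2 + zh)) =
        (β₀ * P / σ2) / ((β₀ * P / σ2 + H ^ 2 + zh) * (H ^ 2 + zh)) / Real.log 2 := by
      rw [div_div, div_div]
      rw [div_eq_div_iff (by positivity) (by positivity)]
      field_simp
      ring
    rw [e1 z hbz, e1 zh hbzh, e2]
    set a := β₀ * P / σ2
    set C := a / ((a + H ^ 2 + zh) * (H ^ 2 + zh)) with hC
    have h' : Real.log (1 + a / (H ^ 2 + zh)) - C * (z - zh) ≤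
        Real.log (1 + a / (H ^ 2 + z)) := by
      have := aux_log a (H ^ 2) z zh ha hb hd1 hd2
      rw [hC]; linarith [this]
    calc Real.logb 2 (1 + a / (H ^ 2 + zh)) - C / Real.log 2 * (z - zh)
        = (Real.log (1 + a / (H ^ 2 + zh)) - C * (z - zh)) / Real.log 2 := by
          rw [Real.logb]; ring
      _ ≤ Real.log (1 + a / (H ^ 2 + z)) / Real.log 2 := by
          gcongr
      _ = Real.logb 2 (1 + a / (H ^ 2 + z)) := rfl
  · intro hq
    subst hq
    simp [hzdef, hzhdef]
end
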